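/- arXiv:1507.02999 — 2 statements merged into one kernel-verified Lean document; each statement's English description precedes it below -/
import Mathlib

section
/- Let H be a real N×K matrix and Φ a real M₂×N matrix satisfying M·Φ·Φᵀ = I (for a fixed positive real M). Then trace(H·Hᵀ·Φᵀ·Φ) ≥ (1/M)·∑_{i=N-M₂+1}^{N} ρᵢ², where ρ₁² ≥ … ≥ ρ_N² are the eigenvalues of H·Hᵀ in decreasing order, with equality when the rows of Φ are (1/√M) times the eigenvectors corresponding to the M₂ smallest eigenvalues. -/
open Matrix

lemma sum_bij_bottom {M₂ N : ℕ} (hM2 : M₂ ≤ N) (g : Fin N → ℝ) :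
    ∑ i : Fin M₂, g ⟨N - M₂ + i.1, by have := i.isLt; omega⟩ =
      ∑ i ∈ Finset.univ.filter (fun i : Fin N => N - M₂ ≤ i.1), g i := by
  rcases Nat.eq_zero_or_pos M₂ with h0 | hpos
  · subst h0
    rw [Finset.filter_eq_empty_iff.mpr (by intro x _; have := x.isLt; omega)]
    simp
  refine Finset.sum_nbij' (i := fun i : Fin M₂ => (⟨N - M₂ + i.1, by have := i.isLt; omega⟩ : Fin N))
    (j := fun i : Fin N => (⟨i.1 - (N - M₂), by have := i.isLt; omega⟩ : Fin M₂)) ?_ ?_ ?_ ?_ ?_ <;>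
    intro a ha
  · simp; omega
  · simp
  · ext; simp
  · simp at ha; ext; simp; omega
  · rfl

lemma min_energy_aux {M₂ N : ℕ} (hM2 : M₂ ≤ N) (M : ℝ) (hM : 0 < M)
    (ρ : Fin N → ℝ) (hρ : Antitone ρ) (c : Fin N → ℝ)
    (hc0 : ∀ i, 0 ≤ c i) (hc1 : ∀ i, c i ≤ 1 / M)
    (hsum : ∑ i, c i = M₂ / M) :
    (1 / M) * ∑ i : Fin M₂, ρ ⟨N - M₂ + i.1, by have := i.isLt; omega⟩ ≤
      ∑ i, ρ i * c i := by
  rcases Nat.eq_zero_or_pos M₂ with h0 | hpos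
  · subst h0
    have hall : ∀ i ∈ Finset.univ, c i = 0 := by
      intro i _
      exact (Finset.sum_eq_zero_iff_of_nonneg (fun j _ => hc0 j)).mp (by
        rw [hsum]; simp) i (Finset.mem_univ i)
    simp only [Finset.univ_eq_empty, Finset.sum_empty, mul_zero]
    calc (0:ℝ) = ∑ i, ρ i * 0 := by simp
      _ ≤ ∑ i, ρ i * c i := by
          apply le_of_eq
          apply Finset.sum_congr rfl
          intro i _
          rw [hall i (Finset.mem_univ i)]
  · have hN : 0 < N := lt_of_lt_of_le hpos hM2
    set B : Finset (Fin N) := Finset.univ.filter (fun i : Fin N => N - M₂ ≤ i.1) with hB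
    set t : ℝ := ρ ⟨N - M₂, by omega⟩ with ht
    have htB : ∀ i ∈ B, ρ i ≤ t := by
      intro i hi
      simp [hB] at hi
      exact hρ (by rw [Fin.le_def]; simpa using (by omega : N - M₂ ≤ i.1))
    have htA : ∀ i ∉ B, t ≤ ρ i := by
      intro i hi
      simp [hB] at hi
      exact hρ (by rw [Fin.le_def]; simpa using (by omega : i.1 ≤ N - M₂))
    have hcard : ∑ _i ∈ B, (1:ℝ) = (M₂:ℝ) := by
      rw [hB, ← sum_bij_bottom hM2 (fun _ => (1:ℝ))]; simp
    have h1 : ∀ i ∈ B, ρ i * (1/M) + t * (c i - 1/M) ≤ ρ i * c i := by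
      intro i hi
      have h2 := htB i hi
      have h3 := hc1 i
      nlinarith [mul_nonneg (sub_nonneg.mpr h2) (sub_nonneg.mpr h3)]
    have h2 : ∀ i ∈ Finset.univ.filter (fun i : Fin N => ¬ (N - M₂ ≤ i.1)), t * c i ≤ ρ i * c i := by
      intro i hi
      simp at hi
      apply mul_le_mul_of_nonneg_right _ (hc0 i)
      exact htA i (by simp [hB]; omega)
    have hsplit : ∑ i ∈ B, c i + ∑ i ∈ Finset.univ.filter (fun i : Fin N => ¬ (N - M₂ ≤ i.1)), c i = M₂ / M := by
      rw [hB, Finset.sum_filter_add_sum_filter_not]; exact hsum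
    have hconst : ∑ _i ∈ B, (1/M : ℝ) = (M₂:ℝ) * (1/M) := by
      rw [Finset.sum_const, nsmul_eq_mul]
      rw [Finset.sum_const, nsmul_eq_mul, mul_one] at hcard
      rw [hcard]
    have expand : (1 / M) * ∑ i ∈ B, ρ i =
        ∑ i ∈ B, (ρ i * (1/M) + t * (c i - 1/M)) +
        ∑ i ∈ Finset.univ.filter (fun i : Fin N => ¬ (N - M₂ ≤ i.1)), t * c i := by
      rw [Finset.sum_add_distrib, ← Finset.sum_mul, ← Finset.mul_sum,
        Finset.sum_sub_distrib, hconst, ← Finset.mul_sum]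
      linear_combination (-t) * hsplit
    rw [sum_bij_bottom hM2 ρ, ← hB, expand]
    calc ∑ i ∈ B, (ρ i * (1/M) + t * (c i - 1/M)) +
        ∑ i ∈ Finset.univ.filter (fun i : Fin N => ¬ (N - M₂ ≤ i.1)), t * c i
        ≤ ∑ i ∈ B, ρ i * c i + ∑ i ∈ Finset.univ.filter (fun i : Fin N => ¬ (N - M₂ ≤ i.1)), ρ i * c i :=
          add_le_add (Finset.sum_le_sum h1) (Finset.sum_le_sum h2)
      _ = ∑ i, ρ i * c i := by rw [hB, Finset.sum_filter_add_sum_filter_not]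

/-- Optimality of the min-energy sampler (Theorem 1): for any `Φ` with `M • Φ Φᵀ = 1`,
`trace (H Hᵀ Φᵀ Φ) ≥ (1/M) ∑_{i=N-M₂}^{N-1} ρ i` (decreasingly-ordered eigenvalues of `H Hᵀ`),
with equality for rows of `Φ` being `(1/√M)` times the bottom `M₂` eigenvectors. -/
theorem maximally_uncorrelated_min_energy
    {N K M₂ : ℕ} (hM2 : M₂ ≤ N) (M : ℝ) (hM : 0 < M)
    (H : Matrix (Fin N) (Fin K) ℝ) (u : Matrix (Fin N) (Fin N) ℝ) (ρ : Fin N → ℝ)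
    (hu : u * uᵀ = 1) (hspec : H * Hᵀ = u * Matrix.diagonal ρ * uᵀ) (hρ : Antitone ρ)
    (Φ : Matrix (Fin M₂) (Fin N) ℝ) (hΦ : M • (Φ * Φᵀ) = 1) :
    (1 / M) * ∑ i : Fin M₂, ρ ⟨N - M₂ + i.1, by have := i.isLt; omega⟩ ≤
      Matrix.trace (H * Hᵀ * Φᵀ * Φ) ∧
    Matrix.trace (H * Hᵀ *
        ((Real.sqrt M)⁻¹ • (uᵀ.submatrix
          (fun i : Fin M₂ => (⟨N - M₂ + i.1, by have := i.isLt; omega⟩ : Fin N)) id))ᵀ *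
        ((Real.sqrt M)⁻¹ • (uᵀ.submatrix
          (fun i : Fin M₂ => (⟨N - M₂ + i.1, by have := i.isLt; omega⟩ : Fin N)) id)))
      = (1 / M) * ∑ i : Fin M₂, ρ ⟨N - M₂ + i.1, by have := i.isLt; omega⟩ := by
  have huu : uᵀ * u = 1 := mul_eq_one_comm.mp hu
  have hΦΦ : Φ * Φᵀ = M⁻¹ • (1 : Matrix (Fin M₂) (Fin M₂) ℝ) := by
    rw [← hΦ, smul_smul, inv_mul_cancel₀ hM.ne', one_smul]
  have hucancel : ∀ {m : Type} [Fintype m] (X : Matrix (Fin N) m ℝ), u * (uᵀ * X) = X := by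
    intro m _ X; rw [← Matrix.mul_assoc, hu, Matrix.one_mul]
  have hΦcancel : ∀ {m : Type} [Fintype m] (X : Matrix (Fin M₂) m ℝ), Φ * (Φᵀ * X) = M⁻¹ • X := by
    intro m _ X; rw [← Matrix.mul_assoc, hΦΦ, Matrix.smul_mul, Matrix.one_mul]
  set P : Matrix (Fin N) (Fin N) ℝ := uᵀ * Φᵀ * Φ * u with hP
  have hPsym : Pᵀ = P := by
    simp [hP, Matrix.transpose_mul, Matrix.mul_assoc]
  have hPP : P * P = M⁻¹ • P := by
    simp only [hP, Matrix.mul_assoc]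
    rw [hucancel, hΦcancel]
    simp [Matrix.mul_smul, Matrix.mul_assoc]
  have hsymm : ∀ i j, P j i = P i j := fun i j => by
    have h := congrFun (congrFun hPsym j) i
    rw [Matrix.transpose_apply] at h
    exact h.symm
  have hentry : ∀ i, P i i = M * ∑ j, (P i j)^2 := by
    intro i
    have h := congrFun (congrFun hPP i) i
    simp only [Matrix.mul_apply, Matrix.smul_apply, smul_eq_mul] at h
    have h2 : ∑ j, P i j * P j i = ∑ j, (P i j)^2 :=
      Finset.sum_congr rfl (fun j _ => by rw [hsymm i j, sq])
    rw [h2] at h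
    rw [h, ← mul_assoc, mul_inv_cancel₀ hM.ne', one_mul]
  have hc0 : ∀ i, 0 ≤ P i i := fun i => by rw [hentry i]; positivity
  have hc1 : ∀ i, P i i ≤ 1 / M := by
    intro i
    have h := hentry i
    have hge : (P i i)^2 ≤ ∑ j, (P i j)^2 :=
      Finset.single_le_sum (f := fun j => (P i j)^2) (fun j _ => sq_nonneg _) (Finset.mem_univ i)
    by_contra hlt
    push_neg at hlt
    have hcpos : 0 < P i i := lt_trans (by positivity) hlt
    have h1 : 1 < P i i * M := (div_lt_iff₀ hM).mp hlt
    have h2 : M * (P i i)^2 ≤ P i i := by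
      calc M * (P i i)^2 ≤ M * ∑ j, (P i j)^2 := by
            exact mul_le_mul_of_nonneg_left hge hM.le
        _ = P i i := h.symm
    nlinarith [h1, h2, hcpos]
  have hsumc : ∑ i, P i i = M₂ / M := by
    have h1 : Matrix.trace P = ∑ i, P i i := by simp [Matrix.trace, Matrix.diag]
    have h2 : Matrix.trace P = M₂ / M := by
      have e0 : P = (uᵀ * Φᵀ) * (Φ * u) := by simp [hP, Matrix.mul_assoc]
      rw [e0, Matrix.trace_mul_comm]
      have e1 : (Φ * u) * (uᵀ * Φᵀ) = M⁻¹ • (1 : Matrix (Fin M₂) (Fin M₂) ℝ) := by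
        rw [Matrix.mul_assoc, hucancel, hΦΦ]
      rw [e1, Matrix.trace_smul]
      simp [Matrix.trace_one, div_eq_inv_mul]
    rw [← h1, h2]
  have htrace : Matrix.trace (H * Hᵀ * Φᵀ * Φ) = ∑ i, ρ i * P i i := by
    rw [hspec]
    have e1 : u * Matrix.diagonal ρ * uᵀ * Φᵀ * Φ = u * (Matrix.diagonal ρ * uᵀ * Φᵀ * Φ) := by
      simp [Matrix.mul_assoc]
    rw [e1, Matrix.trace_mul_comm]
    have e2 : Matrix.diagonal ρ * uᵀ * Φᵀ * Φ * u = Matrix.diagonal ρ * P := by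
      simp [hP, Matrix.mul_assoc]
    rw [e2]
    simp [Matrix.trace, Matrix.diag, Matrix.diagonal_mul]
  set f : Fin M₂ → Fin N := fun i => ⟨N - M₂ + i.1, by have := i.isLt; omega⟩ with hf
  set S : Matrix (Fin M₂) (Fin N) ℝ := uᵀ.submatrix f id with hS
  have hSu : S * u = (1 : Matrix (Fin N) (Fin N) ℝ).submatrix f id := by
    ext i k
    have h := congrFun (congrFun huu (f i)) k
    simp only [Matrix.mul_apply, Matrix.transpose_apply] at h
    exact h
  have hscale : H * Hᵀ * ((Real.sqrt M)⁻¹ • S)ᵀ * ((Real.sqrt M)⁻¹ • S)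
      = M⁻¹ • (H * Hᵀ * Sᵀ * S) := by
    simp only [Matrix.transpose_smul, Matrix.smul_mul, Matrix.mul_smul, smul_smul]
    rw [← mul_inv, Real.mul_self_sqrt hM.le]
  have htr2 : Matrix.trace (H * Hᵀ * Sᵀ * S) = ∑ i : Fin M₂, ρ (f i) := by
    rw [hspec]
    have e1 : u * Matrix.diagonal ρ * uᵀ * Sᵀ * S = u * (Matrix.diagonal ρ * uᵀ * Sᵀ * S) := by
      simp [Matrix.mul_assoc]
    rw [e1, Matrix.trace_mul_comm]
    have e2 : Matrix.diagonal ρ * uᵀ * Sᵀ * S * u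
        = Matrix.diagonal ρ * ((S * u)ᵀ * (S * u)) := by
      simp [Matrix.transpose_mul, Matrix.mul_assoc]
    rw [e2, hSu]
    simp only [Matrix.trace, Matrix.diag, Matrix.diagonal_mul, Matrix.mul_apply,
      Matrix.transpose_apply, Matrix.submatrix_apply, id_eq]
    simp only [Matrix.diagonal_apply, Matrix.one_apply, id_eq, ite_mul, zero_mul,
      Finset.sum_ite_eq, Finset.mem_univ, ite_true, mul_ite, mul_one, mul_zero]
    simp only [Finset.mul_sum]
    rw [Finset.sum_comm]
    simp
  constructor
  · rw [htrace]
    exact min_energy_aux hM2 M hM ρ hρ (fun i => P i i) hc0 hc1 hsumc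
  · show Matrix.trace (H * Hᵀ * ((Real.sqrt M)⁻¹ • S)ᵀ * ((Real.sqrt M)⁻¹ • S)) = _
    rw [hscale, Matrix.trace_smul, htr2]
    simp only [smul_eq_mul, one_div]
    rfl
end

section
/- Let δ > 0, σ₀² > 0, σ_x² > 0, M > 0, and ρ_a² > ρ_b² ≥ 0. If L ≥ 1 + M/(δ·σ₀²), then (σ₀² + L·σ_x²·ρ_b² + M/δ)/(σ₀² + L·σ_x²·ρ_a² + M/δ) ≤ (σ₀² + σ_x²·ρ_b²)/(σ₀² + σ_x²·ρ_a²). -/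
/-- Equation (55): if the hardware budget factor satisfies `L ≥ 1 + M/(δ σ₀²)`, then the
detection-probability scaling factor with `L` imprecise devices is at least as favorable
as with a single infinitely precise device. -/
theorem hardware_budget_compensation
    (δ σ0sq σxsq M ρasq ρbsq L : ℝ)
    (hδ : 0 < δ) (hσ0 : 0 < σ0sq) (hσx : 0 < σxsq) (hM : 0 < M)
    (hρ : ρbsq < ρasq) (hρb : 0 ≤ ρbsq)
    (hL : 1 + M / (δ * σ0sq) ≤ L) :
    (σ0sq + L * σxsq * ρbsq + M / δ) / (σ0sq + L * σxsq * ρasq + M / δ)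
      ≤ (σ0sq + σxsq * ρbsq) / (σ0sq + σxsq * ρasq) := by
  have hMδ : 0 < M / δ := div_pos hM hδ
  have hL1 : M / δ ≤ σ0sq * (L - 1) := by
    have h1 : M / (δ * σ0sq) ≤ L - 1 := by linarith
    have h2 : M ≤ (L - 1) * (δ * σ0sq) := (div_le_iff₀ (by positivity)).mp h1
    rw [div_le_iff₀ hδ]
    nlinarith
  have hL0 : 1 ≤ L := by nlinarith [div_pos hM (mul_pos hδ hσ0)]
  have hρa : 0 ≤ ρasq := le_of_lt (lt_of_le_of_lt hρb hρ)
  have hda : 0 < σ0sq + σxsq * ρasq := by nlinarith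
  have hdb : 0 < σ0sq + L * σxsq * ρasq + M / δ := by
    nlinarith [mul_nonneg (mul_nonneg (by linarith : (0:ℝ) ≤ L) hσx.le) hρa]
  rw [div_le_div_iff₀ hdb hda]
  nlinarith [mul_nonneg (mul_pos hσx (by linarith : (0:ℝ) < ρasq - ρbsq)).le
    (by linarith : (0:ℝ) ≤ σ0sq * (L - 1) - M / δ)]
end
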